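/- Let Θ : C(Ω) → L(C(Ω),C(Ω)) be the map defined by Θ(f) = L_f, where C(Ω) carries the sup norm. Then Θ is Fréchet differentiable at every f ∈ C(Ω), and its derivative is given by DΘ(f)(h) = (φ ↦ L_f(φ·h)) for every h ∈ C(Ω); moreover Θ is analytic. -/

import Mathlib

open MeasureTheory Filter

noncomputable section

namespace Paper

variable {M : Type*} [MetricSpace M]

/-- Prepend one symbol: `ax = (a, x₁, x₂, …)`. -/
def cons (a : M) (x : ℕ → M) : ℕ → M
  | 0 => a
  | n + 1 => x n

/-- Prepend a finite word `a ∈ Mⁿ`. -/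
def consW {n : ℕ} (a : Fin n → M) (x : ℕ → M) : ℕ → M :=
  fun k => if h : k < n then a ⟨k, h⟩ else x (k - n)

/-- The left shift `σ`. -/
def shift (x : ℕ → M) : ℕ → M := fun n => x (n + 1)

/-- Birkhoff sum `Sₙ f = f + f∘σ + … + f∘σ^{n-1}`. -/
def birk (f : (ℕ → M) → ℝ) (n : ℕ) (x : ℕ → M) : ℝ :=
  ∑ i ∈ Finset.range n, f (shift^[i] x)

/-- The metric `d_Ω(x,y) = Σ_{n≥1} 2^{-n} d(xₙ,yₙ)`. -/
def dOmega (x y : ℕ → M) : ℝ :=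
  ∑' n : ℕ, (1 / 2 : ℝ) ^ (n + 1) * dist (x n) (y n)

/-- `dₙ(x,y) = max_{0 ≤ k < n} d_Ω(σᵏx, σᵏy)`. -/
def dN (n : ℕ) (x y : ℕ → M) : ℝ :=
  ⨆ k : Fin n, dOmega (shift^[(k : ℕ)] x) (shift^[(k : ℕ)] y)

/-- The (strong) Walters condition. -/
def Walters (f : (ℕ → M) → ℝ) : Prop :=
  ∀ ε : ℝ, 0 < ε → ∃ η : ℝ, 0 < η ∧ ∀ n : ℕ, 1 ≤ n → ∀ x y : ℕ → M,
    dN n x y ≤ η → |birk f n x - birk f n y| ≤ ε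

/-- `C_f(x,y) = sup_{n ≥ 1} sup_{a ∈ Mⁿ} (Sₙf(ax) − Sₙf(ay))`, a value in `(−∞,+∞]`. -/
def Cf (f : (ℕ → M) → ℝ) (x y : ℕ → M) : EReal :=
  ⨆ n : ℕ, ⨆ a : Fin (n + 1) → M,
    ((birk f (n + 1) (consW a x) - birk f (n + 1) (consW a y) : ℝ) : EReal)

/-- The weak Walters condition. -/
def WeakWalters (f : (ℕ → M) → ℝ) : Prop :=
  ∀ ε : ℝ, 0 < ε → ∃ δ : ℝ, 0 < δ ∧ ∀ x y : ℕ → M,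
    dOmega x y ≤ δ → Cf f x y ≤ (ε : EReal)

variable [MeasurableSpace M]

/-- The Ruelle operator `L_f φ(x) = ∫_M e^{f(ax)} φ(ax) dμ(a)`. -/
def ruelle (μ : Measure M) (f : (ℕ → M) → ℝ) (φ : (ℕ → M) → ℝ) : (ℕ → M) → ℝ :=
  fun x => ∫ a, Real.exp (f (cons a x)) * φ (cons a x) ∂μ

/-- The Ruelle operator with weight `g`: `Lφ(x) = ∫_M g(ax) φ(ax) dμ(a)`. -/
def ruelleG (μ : Measure M) (g : (ℕ → M) → ℝ) (φ : (ℕ → M) → ℝ) : (ℕ → M) → ℝ :=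
  fun x => ∫ a, g (cons a x) * φ (cons a x) ∂μ

set_option maxHeartbeats 2000000 in
/-- Let `Θ : C(Ω) → L(C(Ω), C(Ω))` be the map `Θ(f) = L_f` (characterized
pointwise by the integral formula).  Then `Θ` is Fréchet differentiable at every `f`,
with derivative `DΘ(f)(h) = (φ ↦ L_f(φ·h))`, and moreover `Θ` is analytic. -/
theorem statement3
    [CompactSpace M] [BorelSpace M]
    (μ : Measure M) [IsProbabilityMeasure μ]
    (Θ : C(ℕ → M, ℝ) → C(ℕ → M, ℝ) →L[ℝ] C(ℕ → M, ℝ))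
    (hΘ : ∀ (f φ : C(ℕ → M, ℝ)) (x : ℕ → M),
      Θ f φ x = ∫ a, Real.exp (f (cons a x)) * φ (cons a x) ∂μ) :
    ∀ f : C(ℕ → M, ℝ),
      HasFDerivAt Θ
        (((ContinuousLinearMap.compL ℝ C(ℕ → M, ℝ) C(ℕ → M, ℝ) C(ℕ → M, ℝ)) (Θ f)).comp
          (ContinuousLinearMap.mul ℝ C(ℕ → M, ℝ)).flip) f
      ∧ AnalyticAt ℝ Θ f := by
  intro f
  -- pointwise formula for the Banach-algebra exponential
  have hexp : ∀ (g : C(ℕ → M, ℝ)) (x : ℕ → M),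
      NormedSpace.exp g x = Real.exp (g x) := by
    intro g x
    rw [Real.exp_eq_exp_ℝ]
    exact NormedSpace.map_exp (ContinuousMap.evalAlgHom ℝ ℝ x)
      (ContinuousEvalConst.continuous_eval_const x) g
  -- the continuous linear map `g ↦ (φ ↦ Θ 0 (g * φ))`
  set F : C(ℕ → M, ℝ) →L[ℝ] C(ℕ → M, ℝ) →L[ℝ] C(ℕ → M, ℝ) :=
    ((ContinuousLinearMap.compL ℝ C(ℕ → M, ℝ) C(ℕ → M, ℝ) C(ℕ → M, ℝ)) (Θ 0)).comp
      (ContinuousLinearMap.mul ℝ C(ℕ → M, ℝ)) with hF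
  -- `Θ = F ∘ exp`
  have hkey : Θ = ⇑F ∘ NormedSpace.exp := by
    funext g
    apply ContinuousLinearMap.ext; intro φ
    apply ContinuousMap.ext; intro x
    show Θ g φ x = Θ 0 (NormedSpace.exp g * φ) x
    rw [hΘ, hΘ]
    refine integral_congr_ae (Filter.Eventually.of_forall fun a => ?_)
    simp [hexp, Real.exp_zero, ContinuousMap.mul_apply]
  have hDexp : HasFDerivAt (NormedSpace.exp)
      (NormedSpace.exp f • (1 : C(ℕ → M, ℝ) →L[ℝ] C(ℕ → M, ℝ))) f :=
    hasFDerivAt_exp (𝕂 := ℝ)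
  have hFd : HasFDerivAt (⇑F) F (NormedSpace.exp f) := by
    with_unfolding_all exact ContinuousLinearMap.hasFDerivAt (𝕜 := ℝ) (E := C(ℕ → M, ℝ)) (F := C(ℕ → M, ℝ) →L[ℝ] C(ℕ → M, ℝ)) F
  have hFa : AnalyticAt ℝ (⇑F) (NormedSpace.exp f) := by
    with_unfolding_all exact ContinuousLinearMap.analyticAt (𝕜 := ℝ) (E := C(ℕ → M, ℝ)) (F := C(ℕ → M, ℝ) →L[ℝ] C(ℕ → M, ℝ)) F (NormedSpace.exp f)
  have hcomp : HasFDerivAt (⇑F ∘ NormedSpace.exp)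
      (F.comp (NormedSpace.exp f • (1 : C(ℕ → M, ℝ) →L[ℝ] C(ℕ → M, ℝ)))) f :=
    HasFDerivAt.comp (g := ⇑F) f hFd hDexp
  -- the composed derivative equals the claimed one
  have hder : (((ContinuousLinearMap.compL ℝ C(ℕ → M, ℝ) C(ℕ → M, ℝ) C(ℕ → M, ℝ)) (Θ f)).comp
      (ContinuousLinearMap.mul ℝ C(ℕ → M, ℝ)).flip)
      = F.comp (NormedSpace.exp f • (1 : C(ℕ → M, ℝ) →L[ℝ] C(ℕ → M, ℝ))) := by
    apply ContinuousLinearMap.ext; intro h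
    apply ContinuousLinearMap.ext; intro φ
    apply ContinuousMap.ext; intro x
    show Θ f (φ * h) x = Θ 0 ((NormedSpace.exp f • h) * φ) x
    rw [hΘ, hΘ]
    refine integral_congr_ae (Filter.Eventually.of_forall fun a => ?_)
    simp [hexp, Real.exp_zero, ContinuousMap.mul_apply, ContinuousMap.smul_apply, smul_eq_mul]
    ring
  constructor
  · rw [hder, hkey]
    exact hcomp
  · rw [hkey]
    exact hFa.comp (NormedSpace.exp_analytic (𝕂 := ℝ) f)

end Paper
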